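/- Let (E, d) be a metric space, let A, Q, Q' ⊆ E, and let s > 0. Assume that d(q, q') ≥ s for every q ∈ Q and q' ∈ Q', and that infDist(p', A) ≤ s for every p' ∈ Q'. Then there is no point x ∈ E for which simultaneously there exists p ∈ Q with d(x, p) ≤ infDist(p, A)/4 and there exists p' ∈ Q' with d(x, p') ≤ infDist(p', A)/4. In other words, the wedge of Q and the wedge of Q' (relative to A) are disjoint. -/
import Mathlib


open Set Metric

/-- Disjointness of wedges: if every point of `Q'` is within distance `s` of `A`
and `Q` and `Q'` are at mutual distance at least `s`, then no point can lie
simultaneously in the wedge of `Q` and in the wedge of `Q'` relative to `A`. -/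
theorem wedges_disjoint {E : Type*} [MetricSpace E] (A Q Q' : Set E) (s : ℝ)
    (hs : 0 < s)
    (hsep : ∀ q ∈ Q, ∀ q' ∈ Q', s ≤ dist q q')
    (hA : ∀ p' ∈ Q', infDist p' A ≤ s) :
    ¬ ∃ x : E,
        (∃ p ∈ Q, dist x p ≤ infDist p A / 4) ∧
        (∃ p' ∈ Q', dist x p' ≤ infDist p' A / 4) := by
  rintro ⟨x, ⟨p, hp, hxp⟩, ⟨p', hp', hxp'⟩⟩
  have hsep' : s ≤ dist p p' := hsep p hp p' hp'
  have h1 : infDist p A ≤ infDist p' A + dist p p' := infDist_le_infDist_add_dist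
  have h2 : infDist p' A ≤ s := hA p' hp'
  have h3 : dist p p' ≤ dist p x + dist x p' := dist_triangle p x p'
  rw [dist_comm p x] at h3
  linarith
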